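/- For every admissible q, every pair of non-squares B, B′ ∈ M^×, and every a ∈ M^× with a^Q = a, there exists a′ ∈ M^× with (a′)^Q = a′ such that the family-S pre-semifields P_{q,B,a} and P_{q,B′,a′} are strongly isotopic. -/

import Mathlib

lemma aux_dvd_pow_gcd_sub_one (g a : ℕ) {i j : ℕ}
    (hi : (g:ℤ) ∣ (a:ℤ)^i - 1) (hj : (g:ℤ) ∣ (a:ℤ)^j - 1) :
    (g:ℤ) ∣ (a:ℤ)^(Nat.gcd i j) - 1 := by
  have cast1 : ∀ n : ℕ, (g:ℤ) ∣ (a:ℤ)^n - 1 ↔ ((a : ZMod g))^n = 1 := by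
    intro n
    rw [← sub_eq_zero (a := ((a:ZMod g))^n)]
    constructor
    · intro h
      have := (ZMod.intCast_zmod_eq_zero_iff_dvd _ _).mpr h
      push_cast at this
      convert this using 2
    · intro h
      have : ((((a:ℤ)^n - 1 : ℤ) : ZMod g)) = 0 := by push_cast; convert h using 2
      exact (ZMod.intCast_zmod_eq_zero_iff_dvd _ _).mp this
  rw [cast1] at hi hj ⊢
  exact pow_gcd_eq_one.mpr ⟨hi, hj⟩


lemma aux_gcd_eq_two (p m k : ℕ) (hp : Nat.Prime p) (hp2 : p ≠ 2)
    (hk1 : 1 ≤ k) (hodd : Odd (m / Nat.gcd k m)) :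
    Nat.gcd (p ^ k + 1) (p ^ m - 1) = 2 := by
  have hpodd : Odd p := hp.odd_of_ne_two hp2
  set e := Nat.gcd k m with he
  have he0 : 0 < e := Nat.gcd_pos_of_pos_left m hk1
  -- gcd (2k) m = e
  have step1 : Nat.gcd (2 * k) m = e := by
    have h1 : e ∣ Nat.gcd (2 * k) m :=
      Nat.dvd_gcd ((Nat.gcd_dvd_left k m).mul_left 2) (Nat.gcd_dvd_right k m)
    have h2 : Nat.gcd (2 * k) m ∣ 2 * e := by
      have : Nat.gcd (2 * k) m ∣ Nat.gcd (2 * k) (2 * m) :=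
        Nat.dvd_gcd (Nat.gcd_dvd_left _ _) ((Nat.gcd_dvd_right _ _).mul_left 2)
      rwa [Nat.gcd_mul_left] at this
    obtain ⟨c, hc⟩ := h1
    have hc2 : c ∣ 2 := by
      rw [hc, mul_comm 2 e] at h2
      exact (Nat.mul_dvd_mul_iff_left he0).mp h2
    rcases (Nat.dvd_prime Nat.prime_two).mp hc2 with h | h
    · rw [hc, h, mul_one]
    · exfalso
      have hdm : e * c ∣ m := hc ▸ Nat.gcd_dvd_right (2 * k) m
      obtain ⟨s, hs⟩ := hdm
      have : m / e = 2 * s := by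
        rw [hs, h, mul_assoc, Nat.mul_div_cancel_left _ he0]
      rw [this] at hodd
      exact ((Nat.not_odd_iff_even.mpr ⟨s, two_mul s⟩)) hodd
  set g := Nat.gcd (p ^ k + 1) (p ^ m - 1) with hg
  have hp1 : 1 ≤ p ^ m := Nat.one_le_pow _ _ hp.pos
  have hg2 : 2 ∣ g := by
    refine Nat.dvd_gcd ?_ ?_
    · exact (hpodd.pow).add_one.two_dvd
    · exact (Nat.Odd.sub_odd (hpodd.pow) odd_one).two_dvd
  -- pass to ℤ
  have hgm : (g:ℤ) ∣ (p:ℤ)^m - 1 := by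
    have := Nat.gcd_dvd_right (p ^ k + 1) (p ^ m - 1)
    have h' := Int.natCast_dvd_natCast.mpr this
    rwa [Nat.cast_sub hp1, Nat.cast_pow, Nat.cast_one] at h'
  have hg2k : (g:ℤ) ∣ (p:ℤ)^(2*k) - 1 := by
    have h1 : (g:ℤ) ∣ (p:ℤ)^k + 1 := by
      have := Nat.gcd_dvd_left (p ^ k + 1) (p ^ m - 1)
      have h' := Int.natCast_dvd_natCast.mpr this
      push_cast at h'
      exact h'
    refine h1.trans ⟨(p:ℤ)^k - 1, by rw [mul_comm 2 k, pow_mul]; ring⟩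
  have hge : (g:ℤ) ∣ (p:ℤ)^e - 1 := by
    rw [← step1]
    exact aux_dvd_pow_gcd_sub_one g p hg2k hgm
  have hgk : (g:ℤ) ∣ (p:ℤ)^k - 1 := by
    obtain ⟨t, ht⟩ := Nat.gcd_dvd_left k m
    refine hge.trans ?_
    rw [ht, pow_mul]
    exact sub_one_dvd_pow_sub_one _ _
  have hgp1 : (g:ℤ) ∣ (p:ℤ)^k + 1 := by
    have := Nat.gcd_dvd_left (p ^ k + 1) (p ^ m - 1)
    have h' := Int.natCast_dvd_natCast.mpr this
    push_cast at h'
    exact h'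
  have hgdvd2 : (g:ℤ) ∣ 2 := by
    have := dvd_sub hgp1 hgk
    simpa using this
  have : g ∣ 2 := by exact_mod_cast hgdvd2
  exact Nat.dvd_antisymm this hg2

lemma aux_sq (K : Type) [Field K] [Fintype K] (p m : ℕ) (hp : Nat.Prime p) (hp2 : p ≠ 2)
    (hcard : Fintype.card K = p ^ m)
    (B B' : K) (hB0 : B ≠ 0) (hB : ¬ ∃ c : K, c ^ 2 = B)
    (hB'0 : B' ≠ 0) (hB' : ¬ ∃ c : K, c ^ 2 = B') :
    ∃ s : K, s ≠ 0 ∧ s * s = B' / B := by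
  classical
  have hchar : ringChar K ≠ 2 := by
    intro h
    have h0 := FiniteField.even_card_of_char_two h
    rw [hcard] at h0
    have hodd : Odd (p ^ m) := (hp.odd_of_ne_two hp2).pow
    rw [Nat.odd_iff] at hodd
    omega
  have hsB : ¬ IsSquare B := by
    rintro ⟨r, hr⟩; exact hB ⟨r, by rw [sq, ← hr]⟩
  have hsB' : ¬ IsSquare B' := by
    rintro ⟨r, hr⟩; exact hB' ⟨r, by rw [sq, ← hr]⟩
  have h1 : quadraticChar K B = -1 := (quadraticChar_neg_one_iff_not_isSquare).mpr hsB
  have h2 : quadraticChar K B' = -1 := (quadraticChar_neg_one_iff_not_isSquare).mpr hsB'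
  have hmul : quadraticChar K (B * B') = 1 := by
    rw [map_mul, h1, h2]; ring
  have hsq : IsSquare (B * B') :=
    (quadraticChar_one_iff_isSquare (mul_ne_zero hB0 hB'0)).mp hmul
  obtain ⟨r, hr⟩ := hsq
  refine ⟨r * B⁻¹, ?_, ?_⟩
  · have hr0 : r ≠ 0 := by
      intro h; rw [h, mul_zero] at hr; exact (mul_ne_zero hB0 hB'0) hr
    exact mul_ne_zero hr0 (inv_ne_zero hB0)
  · field_simp
    rw [hr]; ring

lemma aux_t (K : Type) [Field K] [Fintype K] (n q : ℕ)
    (hn : Fintype.card K = n + 1)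
    (hgcd : Nat.gcd (q + 1) n = 2)
    (s : K) (hs : s ≠ 0) : ∃ t : K, t ≠ 0 ∧ t ^ (q + 1) = s * s := by
  classical
  set su : Kˣ := Units.mk0 s hs with hsu
  have hcardu : Fintype.card Kˣ = n := by
    rw [Fintype.card_units, hn]; omega
  have hsn : su ^ n = 1 := by rw [← hcardu]; exact pow_card_eq_one
  have bezout := Nat.gcd_eq_gcd_ab (q + 1) n
  rw [hgcd] at bezout
  push_cast at bezout
  set A := Nat.gcdA (q + 1) n
  set Bz := Nat.gcdB (q + 1) n
  set tu : Kˣ := su ^ A with htu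
  have e1 : tu ^ (q + 1) = su ^ (((q:ℤ) + 1) * A) := by
    rw [htu, ← zpow_natCast (su ^ A) (q + 1), ← zpow_mul]
    congr 1; push_cast; ring
  have e2 : su ^ ((2:ℤ)) = su ^ (((q:ℤ) + 1) * A) * su ^ ((n:ℤ) * Bz) := by
    rw [← zpow_add]; congr 1
  have e3 : su ^ ((n:ℤ) * Bz) = 1 := by rw [zpow_mul, zpow_natCast, hsn, one_zpow]
  have key : tu ^ (q + 1) = su ^ 2 := by
    have h := e2
    rw [e3, mul_one, ← e1] at h
    rw [show ((2:ℤ)) = ((2:ℕ):ℤ) by norm_num, zpow_natCast] at h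
    exact h.symm
  refine ⟨(tu : K), tu.ne_zero, ?_⟩
  have := congrArg (Units.val) key
  rw [Units.val_pow_eq_pow_val, Units.val_pow_eq_pow_val] at this
  rw [this, hsu, sq]
  simp

def sstar (K : Type) [Field K] (q r : ℕ) (B A : K) (z w : K × K) : K × K :=
  (z.1 ^ q * w.1 + z.1 * w.1 ^ q + B * (z.2 ^ q * w.2 + z.2 * w.2 ^ q),
   z.1 ^ r * w.2 + z.2 * w.1 ^ r + A * (z.1 * w.2 ^ r + z.2 ^ r * w.1))

def scaleEquiv {K : Type} [Field K] (c : K) (hc : c ≠ 0) : K ≃+ K where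
  toFun x := c * x
  invFun x := c⁻¹ * x
  left_inv x := by field_simp
  right_inv x := by field_simp
  map_add' x y := mul_add c x y

@[simp] lemma addEquiv_prodCongr_apply' {A B C D : Type*} [AddZeroClass A] [AddZeroClass B]
    [AddZeroClass C] [AddZeroClass D] (f : A ≃+ B) (g : C ≃+ D) (z : A × C) :
    f.prodCongr g z = (f z.1, g z.2) := rfl

@[simp] lemma scaleEquiv_apply {K : Type} [Field K] (c : K) (hc : c ≠ 0) (x : K) :
    scaleEquiv c hc x = c * x := rfl




theorem stmt_15 (p m k : ℕ) (hp : Nat.Prime p) (hp2 : p ≠ 2)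
    (hm : 2 < m) (hmeven : Even m)
    (K : Type) [Field K] [Fintype K] (hcard : Fintype.card K = p ^ m)
    (hk1 : 1 ≤ k) (hk2 : k ≤ m - 1) (hodd : Odd (m / Nat.gcd k m))
    (a B B' : K) (ha0 : a ≠ 0) (haQ : a ^ p ^ (m / 2) = a)
    (hB0 : B ≠ 0) (hB : ¬ ∃ c : K, c ^ 2 = B)
    (hB'0 : B' ≠ 0) (hB' : ¬ ∃ c : K, c ^ 2 = B') :
    ∃ a' : K, a' ≠ 0 ∧ a' ^ p ^ (m / 2) = a' ∧
      ∃ N L : K × K ≃+ K × K, ∀ z w : K × K,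
        N (sstar K (p ^ k) (p ^ (k + m / 2)) B (a / B) z w)
          = sstar K (p ^ k) (p ^ (k + m / 2)) B' (a' / B') (L z) (L w) := by
  set q := p ^ k with hq
  set r := p ^ (k + m / 2) with hr
  set Q := p ^ (m / 2) with hQ
  have hp1 : 1 ≤ p ^ m := Nat.one_le_pow _ _ hp.pos
  -- get t with t^(q+1) = B'/B
  obtain ⟨s, hs0, hss⟩ := aux_sq K p m hp hp2 hcard B B' hB0 hB hB'0 hB'
  have hn : Fintype.card K = (p ^ m - 1) + 1 := by omega
  have hgcd : Nat.gcd (q + 1) (p ^ m - 1) = 2 := aux_gcd_eq_two p m k hp hp2 hk1 hodd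
  obtain ⟨t, ht0, ht⟩ := aux_t K (p ^ m - 1) q hn hgcd s hs0
  rw [hss] at ht
  -- key identities
  have hB'eq : B' = B * (t ^ q * t) := by
    have : B * t ^ (q + 1) = B' := by
      rw [ht]; field_simp
    rw [← this, pow_succ]
  have hrq : q * Q = r := by rw [hq, hQ, hr, ← pow_add]
  have hm2 : m / 2 + m / 2 = m := by
    obtain ⟨h, hh⟩ := hmeven; omega
  have htm : t ^ (p ^ m) = t := by rw [← hcard]; exact FiniteField.pow_card t
  have hrQ : t ^ (r * Q) = t ^ q := by
    have : r * Q = q * p ^ m := by rw [hr, hQ, hq, ← pow_add, ← pow_add, add_assoc, hm2]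
    rw [this, mul_comm, pow_mul, htm]
  refine ⟨a * t ^ (q + r), mul_ne_zero ha0 (pow_ne_zero _ ht0), ?_, ?_⟩
  · -- a'^Q = a'
    rw [mul_pow, haQ, ← pow_mul, add_mul, pow_add, hrq, hrQ, pow_add, mul_comm (t ^ r)]
  · -- the isotopism
    have htr0 : t ^ r ≠ 0 := pow_ne_zero _ ht0
    have hBB'0 : B' / B ≠ 0 := div_ne_zero hB'0 hB0
    refine ⟨(scaleEquiv (B' / B) hBB'0).prodCongr (scaleEquiv (t ^ r) htr0),
            (scaleEquiv t ht0).prodCongr (AddEquiv.refl K), ?_⟩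
    rintro ⟨x, y⟩ ⟨u, v⟩
    have ha'B' : (a * t ^ (q + r)) / B' = (a / B) * (t ^ r / t) := by
      rw [hB'eq, pow_add]
      field_simp
    simp only [sstar, addEquiv_prodCongr_apply', scaleEquiv_apply, AddEquiv.refl_apply,
      Prod.map_apply, Prod.mk.injEq]
    constructor
    · rw [hB'eq]
      field_simp
      ring
    · rw [ha'B']
      field_simp
      ring
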